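/- Fix N_e, N_p > 0 and R₀ > 0 large enough that W_{R₀} is nonempty. Then there exists a constant k₀ such that for every R ≥ R₀ and every minimizer (ρ_e^R, ρ_p^R) of the energy E over W_R, one has ‖ρ_e^R‖_{L^{4/3}} ≤ k₀ and ‖ρ_p^R‖_{L^{4/3}} ≤ k₀. -/

import Mathlib

set_option maxHeartbeats 1000000


open MeasureTheory Set

noncomputable section

abbrev Sp := EuclideanSpace ℝ (Fin 3)

/-- Radial symmetry of a density on `ℝ³`. -/
def Radial (ρ : Sp → ℝ) : Prop := ∀ x y : Sp, ‖x‖ = ‖y‖ → ρ x = ρ y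

/-- The double integral `∬ f(x) g(y) / |x - y| dx dy`. -/
def dblInt (f g : Sp → ℝ) : ℝ := ∫ x : Sp, ∫ y : Sp, f x * g y / ‖x - y‖

/-- The two-species Thomas–Fermi energy functional with nonrelativistic kinetic energy. -/
def energy (ke kp q G me mp : ℝ) (ρe ρp : Sp → ℝ) : ℝ :=
  ke * (∫ x : Sp, ρe x ^ ((5:ℝ)/3)) + kp * (∫ x : Sp, ρp x ^ ((5:ℝ)/3))
    + q ^ 2 / 2 * dblInt (fun x => ρp x - ρe x) (fun x => ρp x - ρe x)
    - G / 2 * dblInt (fun x => mp * ρp x + me * ρe x) (fun x => mp * ρp x + me * ρe x)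

/-- The set `W_R`: pairs of nonnegative radially symmetric (measurable, integrable)
functions with `∫ρ_e = N_e`, `∫ρ_p = N_p`, vanishing outside the ball of radius `R`
and bounded by `R` almost everywhere. -/
def InWR (Ne Np R : ℝ) (ρe ρp : Sp → ℝ) : Prop :=
  Measurable ρe ∧ Measurable ρp ∧ (∀ x, 0 ≤ ρe x) ∧ (∀ x, 0 ≤ ρp x) ∧
  Radial ρe ∧ Radial ρp ∧ Integrable ρe ∧ Integrable ρp ∧
  (∫ x : Sp, ρe x) = Ne ∧ (∫ x : Sp, ρp x) = Np ∧
  (∀ x : Sp, R < ‖x‖ → ρe x = 0) ∧ (∀ x : Sp, R < ‖x‖ → ρp x = 0) ∧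
  (∀ᵐ x : Sp, ρe x ≤ R) ∧ (∀ᵐ x : Sp, ρp x ≤ R)

/-! ### Auxiliary lemmas -/

/-- The truncated Riesz kernel `‖z‖^(-5/2)` on the unit ball. -/
def Kk : Sp → ℝ := (Metric.ball (0:Sp) 1).indicator fun z => ‖z‖ ^ (-(5:ℝ)/2)

lemma Kk_nonneg (z : Sp) : 0 ≤ Kk z := by
  unfold Kk
  apply Set.indicator_nonneg
  intro z _
  positivity

lemma Kk_meas : Measurable Kk := by
  unfold Kk
  exact Measurable.indicator (by fun_prop) measurableSet_ball

lemma Kk_integrable : Integrable Kk := by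
  refine ⟨Kk_meas.aestronglyMeasurable, ?_⟩
  rw [hasFiniteIntegral_iff_norm]
  have hnorm : ∀ a : Sp, ‖Kk a‖ = Kk a := fun a => by
    rw [Real.norm_eq_abs, abs_of_nonneg (Kk_nonneg a)]
  simp only [hnorm]
  rw [lintegral_eq_lintegral_meas_le volume (ae_of_all _ Kk_nonneg) Kk_meas.aemeasurable]
  have h1 : (∫⁻ t in Ioc (0:ℝ) 1, volume {a : Sp | t ≤ Kk a}) < ⊤ := by
    calc ∫⁻ t in Ioc (0:ℝ) 1, volume {a : Sp | t ≤ Kk a}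
        ≤ ∫⁻ _ in Ioc (0:ℝ) 1, volume (Metric.ball (0:Sp) 1) := by
          refine setLIntegral_mono' measurableSet_Ioc fun t ht => measure_mono fun a ha => ?_
          by_contra hb
          have : Kk a = 0 := Set.indicator_of_notMem hb _
          simp only [mem_setOf_eq] at ha
          linarith [ht.1]
      _ = volume (Metric.ball (0:Sp) 1) * volume (Ioc (0:ℝ) 1) := setLIntegral_const _ _
      _ < ⊤ := by
          apply ENNReal.mul_lt_top measure_ball_lt_top
          simp [Real.volume_Ioc]
  have h2 : (∫⁻ t in Ioi (1:ℝ), volume {a : Sp | t ≤ Kk a}) < ⊤ := by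
    have hsub : ∀ t ∈ Ioi (1:ℝ), volume {a : Sp | t ≤ Kk a}
        ≤ ENNReal.ofReal (t ^ (-(6:ℝ)/5)) * volume (Metric.ball (0:Sp) 1) := by
      intro t ht
      simp only [mem_Ioi] at ht
      have ht0 : (0:ℝ) < t := by linarith
      have hr0 : (0:ℝ) ≤ t ^ (-(2/5):ℝ) := Real.rpow_nonneg ht0.le _
      have hsub2 : {a : Sp | t ≤ Kk a} ⊆ Metric.closedBall (0:Sp) (t ^ (-(2/5):ℝ)) := by
        intro a ha
        simp only [mem_setOf_eq] at ha
        have hmem : a ∈ Metric.ball (0:Sp) 1 := by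
          by_contra hb
          have : Kk a = 0 := Set.indicator_of_notMem hb _
          linarith
        have hKa : Kk a = ‖a‖ ^ (-(5:ℝ)/2) := Set.indicator_of_mem hmem _
        have hna : 0 < ‖a‖ := by
          rcases eq_or_lt_of_le (norm_nonneg a) with h | h
          · exfalso
            rw [hKa, ← h, Real.zero_rpow (by norm_num)] at ha
            linarith
          · exact h
        rw [hKa] at ha
        have := Real.rpow_le_rpow_of_nonpos (lt_of_lt_of_le zero_lt_one ht.le |>.trans_le le_rfl |> fun _ => ht0) ha (by norm_num : (-(2/5):ℝ) ≤ 0)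
        rw [← Real.rpow_mul (norm_nonneg a)] at this
        norm_num at this
        rw [mem_closedBall_zero_iff]
        exact this
      calc volume {a : Sp | t ≤ Kk a} ≤ volume (Metric.closedBall (0:Sp) (t ^ (-(2/5):ℝ))) :=
            measure_mono hsub2
        _ = ENNReal.ofReal ((t ^ (-(2/5):ℝ)) ^ Module.finrank ℝ Sp) * volume (Metric.ball (0:Sp) 1) :=
            Measure.addHaar_closedBall volume 0 hr0
        _ = ENNReal.ofReal (t ^ (-(6:ℝ)/5)) * volume (Metric.ball (0:Sp) 1) := by
            congr 2
            have : Module.finrank ℝ Sp = 3 := by simp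
            rw [this, ← Real.rpow_natCast (t ^ (-(2/5):ℝ)) 3, ← Real.rpow_mul ht0.le]
            norm_num
    calc (∫⁻ t in Ioi (1:ℝ), volume {a : Sp | t ≤ Kk a})
        ≤ ∫⁻ t in Ioi (1:ℝ), ENNReal.ofReal (t ^ (-(6:ℝ)/5)) * volume (Metric.ball (0:Sp) 1) :=
          setLIntegral_mono' measurableSet_Ioi hsub
      _ = (∫⁻ t in Ioi (1:ℝ), ENNReal.ofReal (t ^ (-(6:ℝ)/5))) * volume (Metric.ball (0:Sp) 1) :=
          lintegral_mul_const' _ _ measure_ball_lt_top.ne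
      _ < ⊤ := ENNReal.mul_lt_top
          (IntegrableOn.setLIntegral_lt_top (integrableOn_Ioi_rpow_of_lt (by norm_num) one_pos))
          measure_ball_lt_top
  calc (∫⁻ t in Ioi (0:ℝ), volume {a : Sp | t ≤ Kk a})
      ≤ ∫⁻ t in Ioc (0:ℝ) 1 ∪ Ioi 1, volume {a : Sp | t ≤ Kk a} :=
        lintegral_mono_set Ioi_subset_Ioc_union_Ioi
    _ ≤ (∫⁻ t in Ioc (0:ℝ) 1, volume {a : Sp | t ≤ Kk a}) + ∫⁻ t in Ioi (1:ℝ), volume {a : Sp | t ≤ Kk a} :=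
        lintegral_union_le _ _ _
    _ < ⊤ := ENNReal.add_lt_top.2 ⟨h1, h2⟩

lemma young53 {a b : ℝ} (ha : 0 ≤ a) (hb : 0 ≤ b) :
    a * b ≤ a ^ ((5:ℝ)/3) + b ^ ((5:ℝ)/2) := by
  have hpq : ((5:ℝ)/3).HolderConjugate ((5:ℝ)/2) := by
    constructor <;> norm_num
  have h := Real.young_inequality a b hpq
  rw [abs_of_nonneg ha, abs_of_nonneg hb] at h
  have h1 : a ^ ((5:ℝ)/3) / ((5:ℝ)/3) ≤ a ^ ((5:ℝ)/3) := by
    rw [div_le_iff₀ (by norm_num : (0:ℝ) < 5/3)]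
    nlinarith [Real.rpow_nonneg ha ((5:ℝ)/3)]
  have h2 : b ^ ((5:ℝ)/2) / ((5:ℝ)/2) ≤ b ^ ((5:ℝ)/2) := by
    rw [div_le_iff₀ (by norm_num : (0:ℝ) < 5/2)]
    nlinarith [Real.rpow_nonneg hb ((5:ℝ)/2)]
  linarith

lemma kernel_young {h : Sp → ℝ} (hnn : ∀ y, 0 ≤ h y) {lam : ℝ} (hlam : 0 < lam) (x y : Sp) :
    h y * ‖x - y‖⁻¹ ≤
      lam ^ ((5:ℝ)/3) * h y ^ ((5:ℝ)/3) + (lam⁻¹) ^ ((5:ℝ)/2) * Kk (x - y) + h y := by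
  set t := ‖x - y‖ with htdef
  have ht0 : 0 ≤ t := norm_nonneg _
  have hterms : 0 ≤ lam ^ ((5:ℝ)/3) * h y ^ ((5:ℝ)/3) :=
    mul_nonneg (Real.rpow_nonneg hlam.le _) (Real.rpow_nonneg (hnn y) _)
  have hK : 0 ≤ (lam⁻¹) ^ ((5:ℝ)/2) * Kk (x - y) :=
    mul_nonneg (Real.rpow_nonneg (inv_nonneg.2 hlam.le) _) (Kk_nonneg _)
  rcases eq_or_lt_of_le ht0 with h0 | hpos
  · have hz : h y * t⁻¹ = 0 := by rw [← h0]; simp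
    rw [hz]
    have := hnn y
    linarith
  rcases le_or_gt 1 t with h1 | h1
  · have : h y * t⁻¹ ≤ h y := by
      apply mul_le_of_le_one_right (hnn y)
      rw [inv_le_one_iff₀]; right; exact h1
    linarith
  · have hKval : Kk (x - y) = t ^ (-(5:ℝ)/2) := by
      apply Set.indicator_of_mem
      rwa [mem_ball_zero_iff]
    have key : h y * t⁻¹ = (lam * h y) * (lam⁻¹ * t⁻¹) := by
      field_simp
    have hy := young53 (mul_nonneg hlam.le (hnn y))
      (mul_nonneg (inv_nonneg.2 hlam.le) (inv_nonneg.2 ht0))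
    rw [Real.mul_rpow hlam.le (hnn y),
      Real.mul_rpow (inv_nonneg.2 hlam.le) (inv_nonneg.2 ht0)] at hy
    have hinv : (t⁻¹) ^ ((5:ℝ)/2) = t ^ (-(5:ℝ)/2) := by
      rw [Real.inv_rpow ht0, ← Real.rpow_neg ht0]
      norm_num
    rw [hinv] at hy
    rw [key, hKval]
    have := hnn y
    linarith

lemma young_dom_integrable {h : Sp → ℝ} (h53 : Integrable (fun y => h y ^ ((5:ℝ)/3)))
    (hint : Integrable h) (lam : ℝ) (x : Sp) :
    Integrable (fun y : Sp =>
      lam ^ ((5:ℝ)/3) * h y ^ ((5:ℝ)/3) + (lam⁻¹) ^ ((5:ℝ)/2) * Kk (x - y) + h y) :=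
  ((h53.const_mul _).add ((Kk_integrable.comp_sub_left x).const_mul _)).add hint

lemma core_integrable {h : Sp → ℝ} (hm : Measurable h) (hint : Integrable h)
    (hnn : ∀ y, 0 ≤ h y) (h53 : Integrable (fun y => h y ^ ((5:ℝ)/3))) (x : Sp) :
    Integrable (fun y : Sp => h y * ‖x - y‖⁻¹) := by
  refine Integrable.mono' (young_dom_integrable h53 hint 1 x) ?_ ?_
  · exact (hm.mul ((measurable_const.sub measurable_id).norm.inv)).aestronglyMeasurable
  · refine ae_of_all _ fun y => ?_
    rw [Real.norm_eq_abs, abs_of_nonneg (mul_nonneg (hnn y) (inv_nonneg.2 (norm_nonneg _)))]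
    exact kernel_young hnn one_pos x y

lemma inner_bound {h : Sp → ℝ} (hm : Measurable h) (hint : Integrable h)
    (hnn : ∀ y, 0 ≤ h y) (h53 : Integrable (fun y => h y ^ ((5:ℝ)/3)))
    {lam : ℝ} (hlam : 0 < lam) (x : Sp) :
    (∫ y : Sp, h y * ‖x - y‖⁻¹) ≤
      lam ^ ((5:ℝ)/3) * (∫ y : Sp, h y ^ ((5:ℝ)/3)) +
        (lam⁻¹) ^ ((5:ℝ)/2) * (∫ z : Sp, Kk z) + (∫ y : Sp, h y) := by
  have hmono := integral_mono_of_nonneg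
    (ae_of_all _ fun y => mul_nonneg (hnn y) (inv_nonneg.2 (norm_nonneg _)))
    (young_dom_integrable h53 hint lam x)
    (ae_of_all _ fun y => kernel_young hnn hlam x y)
  calc (∫ y : Sp, h y * ‖x - y‖⁻¹)
      ≤ ∫ y : Sp, (lam ^ ((5:ℝ)/3) * h y ^ ((5:ℝ)/3) +
          (lam⁻¹) ^ ((5:ℝ)/2) * Kk (x - y) + h y) := hmono
    _ = (∫ y : Sp, lam ^ ((5:ℝ)/3) * h y ^ ((5:ℝ)/3)) +
        (∫ y : Sp, (lam⁻¹) ^ ((5:ℝ)/2) * Kk (x - y)) + (∫ y : Sp, h y) := by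
        rw [integral_add
            (f := fun y => lam ^ ((5:ℝ)/3) * h y ^ ((5:ℝ)/3) + (lam⁻¹) ^ ((5:ℝ)/2) * Kk (x - y))
            (g := h)
            ((h53.const_mul _).add ((Kk_integrable.comp_sub_left x).const_mul _)) hint,
          integral_add (h53.const_mul _) ((Kk_integrable.comp_sub_left x).const_mul _)]
    _ = lam ^ ((5:ℝ)/3) * (∫ y : Sp, h y ^ ((5:ℝ)/3)) +
        (lam⁻¹) ^ ((5:ℝ)/2) * (∫ z : Sp, Kk z) + (∫ y : Sp, h y) := by
        rw [integral_const_mul, integral_const_mul, integral_sub_left_eq_self Kk volume x]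

lemma dblInt_abs_le' {h : Sp → ℝ} (hm : Measurable h) (hint : Integrable h)
    (hnn : ∀ y, 0 ≤ h y) (h53 : Integrable (fun y => h y ^ ((5:ℝ)/3)))
    {lam : ℝ} (hlam : 0 < lam)
    {f : Sp → ℝ} {c : ℝ} (hc : 0 ≤ c) (habs : ∀ x, |f x| ≤ c * h x) :
    |∫ x : Sp, ∫ y : Sp, f x * f y * ‖x - y‖⁻¹| ≤
      c ^ 2 * (∫ y : Sp, h y) *
        (lam ^ ((5:ℝ)/3) * (∫ y : Sp, h y ^ ((5:ℝ)/3)) +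
          (lam⁻¹) ^ ((5:ℝ)/2) * (∫ z : Sp, Kk z) + (∫ y : Sp, h y)) := by
  set B := lam ^ ((5:ℝ)/3) * (∫ y : Sp, h y ^ ((5:ℝ)/3)) +
      (lam⁻¹) ^ ((5:ℝ)/2) * (∫ z : Sp, Kk z) + (∫ y : Sp, h y) with hBdef
  have hB0 : 0 ≤ B := by
    have t1 : 0 ≤ (∫ y : Sp, h y ^ ((5:ℝ)/3)) := integral_nonneg fun y => Real.rpow_nonneg (hnn y) _
    have t2 : 0 ≤ (∫ z : Sp, Kk z) := integral_nonneg Kk_nonneg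
    have t3 : 0 ≤ (∫ y : Sp, h y) := integral_nonneg hnn
    have u1 : 0 ≤ lam ^ ((5:ℝ)/3) := Real.rpow_nonneg hlam.le _
    have u2 : 0 ≤ (lam⁻¹) ^ ((5:ℝ)/2) := Real.rpow_nonneg (inv_nonneg.2 hlam.le) _
    have w1 := mul_nonneg u1 t1
    have w2 := mul_nonneg u2 t2
    rw [hBdef]
    linarith
  have hinner : ∀ x : Sp, |∫ y : Sp, f x * f y * ‖x - y‖⁻¹| ≤ c ^ 2 * B * h x := by
    intro x
    have step1 : |∫ y : Sp, f x * f y * ‖x - y‖⁻¹| ≤ ∫ y : Sp, |f x * f y * ‖x - y‖⁻¹| := by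
      rw [← Real.norm_eq_abs]
      refine le_trans (norm_integral_le_integral_norm _) (le_of_eq ?_)
      simp only [Real.norm_eq_abs]
    have step2 : (∫ y : Sp, |f x * f y * ‖x - y‖⁻¹|) ≤
        ∫ y : Sp, (c * h x) * (c * (h y * ‖x - y‖⁻¹)) := by
      refine integral_mono_of_nonneg (ae_of_all _ fun y => abs_nonneg _)
        (((core_integrable hm hint hnn h53 x).const_mul c).const_mul (c * h x))
        (ae_of_all _ fun y => ?_)
      simp only
      rw [abs_mul, abs_mul]
      have e1 : |(‖x - y‖)⁻¹| = ‖x - y‖⁻¹ := abs_of_nonneg (inv_nonneg.2 (norm_nonneg _))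
      rw [e1]
      have b1 := habs x
      have b2 := habs y
      have hfx : 0 ≤ |f x| := abs_nonneg _
      have hfy : 0 ≤ |f y| := abs_nonneg _
      have hin : (0:ℝ) ≤ ‖x - y‖⁻¹ := inv_nonneg.2 (norm_nonneg _)
      calc |f x| * |f y| * ‖x - y‖⁻¹ ≤ (c * h x) * (c * h y) * ‖x - y‖⁻¹ := by
            apply mul_le_mul_of_nonneg_right _ hin
            exact mul_le_mul b1 b2 hfy (le_trans hfx b1)
        _ = (c * h x) * (c * (h y * ‖x - y‖⁻¹)) := by ring
    have step3 : (∫ y : Sp, (c * h x) * (c * (h y * ‖x - y‖⁻¹))) ≤ c ^ 2 * B * h x := by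
      rw [integral_const_mul, integral_const_mul]
      have hI := inner_bound hm hint hnn h53 hlam x
      have hxnn : 0 ≤ h x := hnn x
      calc c * h x * (c * ∫ y : Sp, h y * ‖x - y‖⁻¹)
          ≤ c * h x * (c * B) := by
            apply mul_le_mul_of_nonneg_left _ (mul_nonneg hc hxnn)
            exact mul_le_mul_of_nonneg_left hI hc
        _ = c ^ 2 * B * h x := by ring
    exact le_trans step1 (le_trans step2 step3)
  have step4 : |∫ x : Sp, ∫ y : Sp, f x * f y * ‖x - y‖⁻¹| ≤
      ∫ x : Sp, |∫ y : Sp, f x * f y * ‖x - y‖⁻¹| := by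
    rw [← Real.norm_eq_abs]
    refine le_trans (norm_integral_le_integral_norm _) (le_of_eq ?_)
    simp only [Real.norm_eq_abs]
  have step5 : (∫ x : Sp, |∫ y : Sp, f x * f y * ‖x - y‖⁻¹|) ≤ ∫ x : Sp, c ^ 2 * B * h x :=
    integral_mono_of_nonneg (ae_of_all _ fun x => abs_nonneg _)
      (hint.const_mul _) (ae_of_all _ hinner)
  calc |∫ x : Sp, ∫ y : Sp, f x * f y * ‖x - y‖⁻¹|
      ≤ ∫ x : Sp, c ^ 2 * B * h x := le_trans step4 step5
    _ = c ^ 2 * B * (∫ x : Sp, h x) := integral_const_mul _ _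
    _ = c ^ 2 * (∫ y : Sp, h y) * B := by ring

lemma rpow53_le_mul {a M : ℝ} (ha : 0 ≤ a) (haM : a ≤ M) :
    a ^ ((5:ℝ)/3) ≤ M ^ ((2:ℝ)/3) * a := by
  rcases eq_or_lt_of_le ha with h0 | h0
  · rw [← h0, Real.zero_rpow (by norm_num)]
    simp
  · have hM : 0 ≤ M := le_trans ha haM
    rw [show (5:ℝ)/3 = 2/3 + 1 by norm_num, Real.rpow_add h0, Real.rpow_one]
    exact mul_le_mul_of_nonneg_right (Real.rpow_le_rpow ha haM (by norm_num)) ha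

lemma rpow43_le {a : ℝ} (ha : 0 ≤ a) : a ^ ((4:ℝ)/3) ≤ a + a ^ ((5:ℝ)/3) := by
  rcases eq_or_lt_of_le ha with h0 | h0
  · rw [← h0, Real.zero_rpow (by norm_num), Real.zero_rpow (by norm_num)]
    norm_num
  rcases le_or_gt a 1 with h1 | h1
  · have : a ^ ((4:ℝ)/3) ≤ a ^ (1:ℝ) :=
      Real.rpow_le_rpow_of_exponent_ge h0 h1 (by norm_num)
    rw [Real.rpow_one] at this
    have h2 : 0 ≤ a ^ ((5:ℝ)/3) := Real.rpow_nonneg ha _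
    linarith
  · have : a ^ ((4:ℝ)/3) ≤ a ^ ((5:ℝ)/3) :=
      Real.rpow_le_rpow_of_exponent_le h1.le (by norm_num)
    linarith

lemma add_rpow53 {a b : ℝ} (ha : 0 ≤ a) (hb : 0 ≤ b) :
    (a + b) ^ ((5:ℝ)/3) ≤ 4 * (a ^ ((5:ℝ)/3) + b ^ ((5:ℝ)/3)) := by
  have hmax : 0 ≤ max a b := le_trans ha (le_max_left _ _)
  have h1 : (a + b) ^ ((5:ℝ)/3) ≤ (2 * max a b) ^ ((5:ℝ)/3) := by
    apply Real.rpow_le_rpow (by positivity)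
    · rcases le_total a b with h | h
      · simp [max_eq_right h]; linarith
      · simp [max_eq_left h]; linarith
    · norm_num
  have h2 : (2 * max a b) ^ ((5:ℝ)/3) = 2 ^ ((5:ℝ)/3) * (max a b) ^ ((5:ℝ)/3) :=
    Real.mul_rpow (by norm_num) hmax
  have h3 : (2:ℝ) ^ ((5:ℝ)/3) ≤ 4 := by
    have : (2:ℝ) ^ ((5:ℝ)/3) ≤ 2 ^ (2:ℝ) :=
      Real.rpow_le_rpow_of_exponent_le one_le_two (by norm_num)
    have h4 : (2:ℝ) ^ (2:ℝ) = 4 := by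
      rw [show (2:ℝ) = ((2:ℕ):ℝ) from by norm_num, Real.rpow_natCast]
      norm_num
    linarith
  have h5 : (max a b) ^ ((5:ℝ)/3) ≤ a ^ ((5:ℝ)/3) + b ^ ((5:ℝ)/3) := by
    rcases le_total a b with h | h
    · rw [max_eq_right h]
      have := Real.rpow_nonneg ha ((5:ℝ)/3); linarith
    · rw [max_eq_left h]
      have := Real.rpow_nonneg hb ((5:ℝ)/3); linarith
  have h6 : 0 ≤ (max a b) ^ ((5:ℝ)/3) := Real.rpow_nonneg hmax _
  calc (a + b) ^ ((5:ℝ)/3) ≤ 2 ^ ((5:ℝ)/3) * (max a b) ^ ((5:ℝ)/3) := by rw [← h2]; exact h1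
    _ ≤ 4 * (max a b) ^ ((5:ℝ)/3) := mul_le_mul_of_nonneg_right h3 h6
    _ ≤ 4 * (a ^ ((5:ℝ)/3) + b ^ ((5:ℝ)/3)) := by linarith

lemma integrable_rpow53_of_bounded {ρ : Sp → ℝ} (hm : Measurable ρ) (hint : Integrable ρ)
    (hnn : ∀ x, 0 ≤ ρ x) {M : ℝ} (hb : ∀ᵐ x : Sp, ρ x ≤ M) :
    Integrable (fun x => ρ x ^ ((5:ℝ)/3)) := by
  refine Integrable.mono' (hint.const_mul (M ^ ((2:ℝ)/3))) ?_ ?_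
  · apply Measurable.aestronglyMeasurable
    fun_prop
  · filter_upwards [hb] with x hx
    rw [Real.norm_eq_abs, abs_of_nonneg (Real.rpow_nonneg (hnn x) _)]
    exact rpow53_le_mul (hnn x) hx

lemma InWR_mono {Ne Np R₀ R : ℝ} (hR : R₀ ≤ R) {σe σp : Sp → ℝ}
    (h : InWR Ne Np R₀ σe σp) : InWR Ne Np R σe σp := by
  obtain ⟨m1, m2, n1, n2, r1, r2, i1, i2, e1, e2, z1, z2, b1, b2⟩ := h
  exact ⟨m1, m2, n1, n2, r1, r2, i1, i2, e1, e2,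
    fun x hx => z1 x (lt_of_le_of_lt hR hx),
    fun x hx => z2 x (lt_of_le_of_lt hR hx),
    b1.mono fun x hx => le_trans hx hR,
    b2.mono fun x hx => le_trans hx hR⟩

/-- Lemma 4.4 (uniform `L^{4/3}` bound): there is a constant `k₀` bounding the
`L^{4/3}` norms of all minimizers over `W_R` for every `R ≥ R₀`. -/
theorem stmt7 (ke kp q G me mp : ℝ)
    (hke : 0 < ke) (hkp : 0 < kp) (hq : 0 < q) (hG : 0 < G) (hme : 0 < me) (hmp : 0 < mp)
    (hGp : G * mp ^ 2 < q ^ 2) (hGe : G * me ^ 2 < q ^ 2)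
    (Ne Np : ℝ) (hNe : 0 < Ne) (hNp : 0 < Np)
    (R₀ : ℝ) (hR₀ : 0 < R₀) (hne : ∃ σe σp : Sp → ℝ, InWR Ne Np R₀ σe σp) :
    ∃ k₀ : ℝ, ∀ R : ℝ, R₀ ≤ R → ∀ ρe ρp : Sp → ℝ, InWR Ne Np R ρe ρp →
      (∀ σe σp : Sp → ℝ, InWR Ne Np R σe σp →
        energy ke kp q G me mp ρe ρp ≤ energy ke kp q G me mp σe σp) →
      (∫ x : Sp, ρe x ^ ((4:ℝ)/3)) ^ ((3:ℝ)/4) ≤ k₀ ∧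
      (∫ x : Sp, ρp x ^ ((4:ℝ)/3)) ^ ((3:ℝ)/4) ≤ k₀ := by
  obtain ⟨σe₀, σp₀, hσ₀⟩ := hne
  set C₀ : ℝ := energy ke kp q G me mp σe₀ σp₀ with hC₀def
  set N : ℝ := Ne + Np with hNdef
  have hN : 0 < N := by rw [hNdef]; linarith
  set cK : ℝ := ∫ z : Sp, Kk z with hcKdef
  have hcK : 0 ≤ cK := integral_nonneg Kk_nonneg
  set kmin : ℝ := min ke kp with hkmindef
  have hkmin : 0 < kmin := lt_min hke hkp
  set A : ℝ := (q ^ 2 / 2 + G / 2 * (me + mp) ^ 2) * N with hAdef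
  have hA : 0 < A := by rw [hAdef]; positivity
  set lam : ℝ := (kmin / (8 * A)) ^ ((3:ℝ)/5) with hlamdef
  have hlam : 0 < lam := Real.rpow_pos_of_pos (by positivity) _
  have hlam53 : lam ^ ((5:ℝ)/3) = kmin / (8 * A) := by
    rw [hlamdef, ← Real.rpow_mul (by positivity)]
    rw [show (3:ℝ)/5 * (5/3) = 1 by norm_num, Real.rpow_one]
  set c₂ : ℝ := (lam⁻¹) ^ ((5:ℝ)/2) * cK + N with hc₂def
  set C₂ : ℝ := 2 * (C₀ + A * c₂) / kmin with hC₂def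
  refine ⟨(max (N + C₂) 0) ^ ((3:ℝ)/4), ?_⟩
  intro R hR ρe ρp hρ hmin
  obtain ⟨hme1, hmp1, hne1, hnp1, _, _, hie, hip, hinte, hintp, _, _, hbe, hbp⟩ := hρ
  have hRpos : (0:ℝ) < R := lt_of_lt_of_le hR₀ hR
  -- the total density
  set h : Sp → ℝ := fun x => ρe x + ρp x with hhdef
  have hm : Measurable h := hme1.add hmp1
  have hint : Integrable h := hie.add hip
  have hnn : ∀ y, 0 ≤ h y := fun y => add_nonneg (hne1 y) (hnp1 y)
  have hintN : (∫ x : Sp, h x) = N := by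
    rw [hNdef]
    rw [show (∫ x : Sp, h x) = ∫ x : Sp, (ρe x + ρp x) from rfl]
    rw [integral_add hie hip, hinte, hintp]
  have hb2R : ∀ᵐ x : Sp, h x ≤ 2 * R := by
    filter_upwards [hbe, hbp] with x h1 h2
    show ρe x + ρp x ≤ 2 * R
    linarith
  -- integrability of the 5/3 powers
  have hρe53 : Integrable (fun x => ρe x ^ ((5:ℝ)/3)) :=
    integrable_rpow53_of_bounded hme1 hie hne1 hbe
  have hρp53 : Integrable (fun x => ρp x ^ ((5:ℝ)/3)) :=
    integrable_rpow53_of_bounded hmp1 hip hnp1 hbp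
  have hh53 : Integrable (fun x => h x ^ ((5:ℝ)/3)) :=
    integrable_rpow53_of_bounded hm hint hnn hb2R
  -- the minimality comparison
  have hcomp : energy ke kp q G me mp ρe ρp ≤ C₀ := hmin σe₀ σp₀ (InWR_mono hR hσ₀)
  have hd1 : dblInt (fun x => ρp x - ρe x) (fun x => ρp x - ρe x) =
      ∫ x : Sp, ∫ y : Sp, (ρp x - ρe x) * (ρp y - ρe y) * ‖x - y‖⁻¹ := by
    simp only [dblInt, div_eq_mul_inv]
  have hd2 : dblInt (fun x => mp * ρp x + me * ρe x) (fun x => mp * ρp x + me * ρe x) =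
      ∫ x : Sp, ∫ y : Sp, (mp * ρp x + me * ρe x) * (mp * ρp y + me * ρe y) * ‖x - y‖⁻¹ := by
    simp only [dblInt, div_eq_mul_inv]
  rw [energy, hd1, hd2] at hcomp
  set Te : ℝ := ∫ x : Sp, ρe x ^ ((5:ℝ)/3) with hTedef
  set Tp : ℝ := ∫ x : Sp, ρp x ^ ((5:ℝ)/3) with hTpdef
  set T' : ℝ := ∫ x : Sp, h x ^ ((5:ℝ)/3) with hT'def
  set D1 : ℝ := ∫ x : Sp, ∫ y : Sp, (ρp x - ρe x) * (ρp y - ρe y) * ‖x - y‖⁻¹ with hD1def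
  set D2 : ℝ := ∫ x : Sp, ∫ y : Sp, (mp * ρp x + me * ρe x) * (mp * ρp y + me * ρe y) * ‖x - y‖⁻¹
    with hD2def
  have hTe0 : 0 ≤ Te := integral_nonneg fun x => Real.rpow_nonneg (hne1 x) _
  have hTp0 : 0 ≤ Tp := integral_nonneg fun x => Real.rpow_nonneg (hnp1 x) _
  have hT'0 : 0 ≤ T' := integral_nonneg fun x => Real.rpow_nonneg (hnn x) _
  have hT'4 : T' ≤ 4 * (Te + Tp) := by
    have hmono := integral_mono hh53 ((hρe53.add hρp53).const_mul 4)
      (fun x => add_rpow53 (hne1 x) (hnp1 x))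
    calc T' ≤ ∫ x : Sp, 4 * (ρe x ^ ((5:ℝ)/3) + ρp x ^ ((5:ℝ)/3)) := hmono
      _ = 4 * (Te + Tp) := by
          rw [integral_const_mul, integral_add hρe53 hρp53]
  -- bounds on the interaction terms
  set B : ℝ := lam ^ ((5:ℝ)/3) * T' + (lam⁻¹) ^ ((5:ℝ)/2) * cK + N with hBdef
  have habs1 : ∀ x, |ρp x - ρe x| ≤ 1 * h x := by
    intro x
    rw [one_mul]
    show |ρp x - ρe x| ≤ ρe x + ρp x
    rw [abs_sub_comm]
    calc |ρe x - ρp x| ≤ |ρe x| + |ρp x| := abs_sub _ _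
      _ = ρe x + ρp x := by rw [abs_of_nonneg (hne1 x), abs_of_nonneg (hnp1 x)]
  have habs2 : ∀ x, |mp * ρp x + me * ρe x| ≤ (me + mp) * h x := by
    intro x
    show |mp * ρp x + me * ρe x| ≤ (me + mp) * (ρe x + ρp x)
    rw [abs_of_nonneg (add_nonneg (mul_nonneg hmp.le (hnp1 x)) (mul_nonneg hme.le (hne1 x)))]
    have hdiff : (me + mp) * (ρe x + ρp x) - (mp * ρp x + me * ρe x)
        = me * ρp x + mp * ρe x := by ring
    linarith [mul_nonneg hme.le (hnp1 x), mul_nonneg hmp.le (hne1 x), hdiff]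
  have hBeq : lam ^ ((5:ℝ)/3) * (∫ y : Sp, h y ^ ((5:ℝ)/3)) +
      (lam⁻¹) ^ ((5:ℝ)/2) * (∫ z : Sp, Kk z) + (∫ y : Sp, h y) = B := by
    rw [hBdef, hintN]
  have hD1b : |D1| ≤ 1 ^ 2 * N * B := by
    have := dblInt_abs_le' hm hint hnn hh53 hlam (f := fun x => ρp x - ρe x)
      (c := 1) one_pos.le habs1
    rw [hBeq, hintN] at this
    exact this
  have hD2b : |D2| ≤ (me + mp) ^ 2 * N * B := by
    have := dblInt_abs_le' hm hint hnn hh53 hlam (f := fun x => mp * ρp x + me * ρe x)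
      (c := me + mp) (by positivity) habs2
    rw [hBeq, hintN] at this
    exact this
  have hB0 : 0 ≤ B := by
    have u1 : 0 ≤ lam ^ ((5:ℝ)/3) := Real.rpow_nonneg hlam.le _
    have u2 : 0 ≤ (lam⁻¹) ^ ((5:ℝ)/2) := Real.rpow_nonneg (inv_nonneg.2 hlam.le) _
    have w1 := mul_nonneg u1 hT'0
    have w2 := mul_nonneg u2 hcK
    rw [hBdef]
    linarith
  clear_value C₀ N cK kmin A lam c₂ C₂ Te Tp T' D1 D2 B
  -- assemble the kinetic energy bound
  have hkin : kmin * (Te + Tp) ≤ C₀ + A * B := by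
    have e1 : kmin * Te ≤ ke * Te :=
      mul_le_mul_of_nonneg_right (by rw [hkmindef]; exact min_le_left _ _) hTe0
    have e2 : kmin * Tp ≤ kp * Tp :=
      mul_le_mul_of_nonneg_right (by rw [hkmindef]; exact min_le_right _ _) hTp0
    have a1 : q ^ 2 / 2 * (-|D1|) ≤ q ^ 2 / 2 * D1 :=
      mul_le_mul_of_nonneg_left (neg_abs_le D1) (by positivity)
    have a2 : G / 2 * D2 ≤ G / 2 * |D2| :=
      mul_le_mul_of_nonneg_left (le_abs_self D2) (by positivity)
    have m1 : q ^ 2 / 2 * |D1| ≤ q ^ 2 / 2 * (1 ^ 2 * N * B) :=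
      mul_le_mul_of_nonneg_left hD1b (by positivity)
    have m2 : G / 2 * |D2| ≤ G / 2 * ((me + mp) ^ 2 * N * B) :=
      mul_le_mul_of_nonneg_left hD2b (by positivity)
    have hABeq : q ^ 2 / 2 * (1 ^ 2 * N * B) + G / 2 * ((me + mp) ^ 2 * N * B) = A * B := by
      rw [hAdef]; ring
    linarith [hcomp, e1, e2, a1, a2, m1, m2, hABeq]
  have hAlam : A * lam ^ ((5:ℝ)/3) = kmin / 8 := by
    rw [hlam53]
    field_simp
  have hABsplit : A * B = kmin / 8 * T' + A * c₂ := by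
    rw [hBdef, hc₂def]
    linear_combination T' * hAlam
  have hT : Te + Tp ≤ C₂ := by
    have h8 : kmin / 8 * T' ≤ kmin / 8 * (4 * (Te + Tp)) :=
      mul_le_mul_of_nonneg_left hT'4 (by positivity)
    have hhalf : kmin / 2 * (Te + Tp) ≤ C₀ + A * c₂ := by linarith [hkin, hABsplit, h8]
    rw [hC₂def, le_div_iff₀ hkmin]
    linarith [hhalf]
  -- bound the 4/3 integrals
  have key : ∀ (ρ : Sp → ℝ), Integrable ρ → (∀ x, 0 ≤ ρ x) →
      Integrable (fun x => ρ x ^ ((5:ℝ)/3)) →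
      (∫ x : Sp, ρ x ^ ((4:ℝ)/3)) ≤ (∫ x : Sp, ρ x) + (∫ x : Sp, ρ x ^ ((5:ℝ)/3)) := by
    intro ρ hiρ hnρ h53ρ
    have hm2 := integral_mono_of_nonneg
      (ae_of_all _ fun x => Real.rpow_nonneg (hnρ x) ((4:ℝ)/3))
      (hiρ.add h53ρ) (ae_of_all _ fun x => rpow43_le (hnρ x))
    calc (∫ x : Sp, ρ x ^ ((4:ℝ)/3)) ≤ ∫ x : Sp, (ρ x + ρ x ^ ((5:ℝ)/3)) := hm2
      _ = (∫ x : Sp, ρ x) + (∫ x : Sp, ρ x ^ ((5:ℝ)/3)) := integral_add hiρ h53ρ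
  constructor
  · have h1 : (∫ x : Sp, ρe x ^ ((4:ℝ)/3)) ≤ max (N + C₂) 0 := by
      have hk := key ρe hie hne1 hρe53
      rw [hinte, ← hTedef] at hk
      have h2 : Ne + Te ≤ N + C₂ := by rw [hNdef]; linarith
      exact le_trans hk (le_trans h2 (le_max_left _ _))
    exact Real.rpow_le_rpow
      (integral_nonneg fun x => Real.rpow_nonneg (hne1 x) _) h1 (by norm_num)
  · have h1 : (∫ x : Sp, ρp x ^ ((4:ℝ)/3)) ≤ max (N + C₂) 0 := by
      have hk := key ρp hip hnp1 hρp53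
      rw [hintp, ← hTpdef] at hk
      have h2 : Np + Tp ≤ N + C₂ := by rw [hNdef]; linarith
      exact le_trans hk (le_trans h2 (le_max_left _ _))
    exact Real.rpow_le_rpow
      (integral_nonneg fun x => Real.rpow_nonneg (hnp1 x) _) h1 (by norm_num)
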